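/- arXiv:2002.08733 — 2 statements merged into one kernel-verified Lean document; each statement's English description precedes it below -/
import Mathlib

section
/- Covariant transformation of curls (Piola identity): let Φ(x̂) = A x̂ + b be an invertible affine map on ℝ³ and let φ̂: ℝ³ → ℝ³ be a continuously differentiable vector field. Define φ(x) = A^{-T} φ̂(Φ^{-1}(x)). Then for all x, (∇×φ)(x) = (det A)^{-1} A (∇̂×φ̂)(Φ^{-1}(x)). -/
open Matrix

/-- Partial derivative in direction `i`. -/
noncomputable def pd (i : Fin 3) (f : (Fin 3 → ℝ) → ℝ) (x : Fin 3 → ℝ) : ℝ :=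
  fderiv ℝ f x (Pi.single i 1)

/-- The curl of a vector field on `ℝ³`. -/
noncomputable def curl (v : (Fin 3 → ℝ) → (Fin 3 → ℝ)) (x : Fin 3 → ℝ) : Fin 3 → ℝ :=
  ![pd 1 (fun y => v y 2) x - pd 2 (fun y => v y 1) x,
    pd 2 (fun y => v y 0) x - pd 0 (fun y => v y 2) x,
    pd 0 (fun y => v y 1) x - pd 1 (fun y => v y 0) x]

set_option maxHeartbeats 1600000 in
/-- Piola identity: the curl of a covariantly transformed field transforms
contravariantly. -/
theorem curl_covariant_transform
    (A : Matrix (Fin 3) (Fin 3) ℝ) (b : Fin 3 → ℝ) (hA : IsUnit A.det)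
    (φhat : (Fin 3 → ℝ) → (Fin 3 → ℝ)) (hφ : ContDiff ℝ 1 φhat)
    (φ : (Fin 3 → ℝ) → (Fin 3 → ℝ))
    (hmap : ∀ x, φ x = (A⁻¹)ᵀ.mulVec (φhat (A⁻¹.mulVec (x - b)))) (x : Fin 3 → ℝ) :
    curl φ x = (A.det)⁻¹ • A.mulVec (curl φhat (A⁻¹.mulVec (x - b))) := by
  classical
  set B : Matrix (Fin 3) (Fin 3) ℝ := A⁻¹ with hBdef
  set xh : Fin 3 → ℝ := B.mulVec (x - b) with hxh
  let L : (Fin 3 → ℝ) →L[ℝ] (Fin 3 → ℝ) := LinearMap.toContinuousLinearMap B.mulVecLin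
  have hL : ∀ v, L v = B.mulVec v := fun v => rfl
  have hg : HasFDerivAt (fun y : Fin 3 → ℝ => B.mulVec (y - b)) L x := by
    have h1 : (fun y : Fin 3 → ℝ => B.mulVec (y - b)) = fun y => L y - B.mulVec b := by
      funext y; rw [hL, Matrix.mulVec_sub]
    rw [h1]
    exact L.hasFDerivAt.sub_const _
  have hφd : Differentiable ℝ φhat := hφ.differentiable one_ne_zero
  have hcomp : ∀ k : Fin 3, Differentiable ℝ (fun y => φhat y k) := fun k =>
    (ContinuousLinearMap.proj k : ((Fin 3 → ℝ)) →L[ℝ] ℝ).differentiable.comp hφd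
  have key : ∀ i j : Fin 3, pd i (fun y => φ y j) x
      = ∑ k : Fin 3, ∑ l : Fin 3, B k j * B l i * pd l (fun y => φhat y k) xh := by
    intro i j
    have hφj : (fun y => φ y j) = fun y => ∑ k : Fin 3, B k j * φhat (B.mulVec (y - b)) k := by
      funext y
      rw [hmap y]
      simp [Matrix.mulVec, dotProduct, Matrix.transpose_apply, mul_comm]
    have hterm : ∀ k : Fin 3, HasFDerivAt (fun y => B k j * φhat (B.mulVec (y - b)) k)
        ((B k j) • ((fderiv ℝ (fun y => φhat y k) xh).comp L)) x := by
      intro k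
      have h1 : HasFDerivAt (fun y => φhat y k) (fderiv ℝ (fun y => φhat y k) xh) xh :=
        (hcomp k xh).hasFDerivAt
      exact (h1.comp x hg).const_mul (B k j)
    have hsum : HasFDerivAt (fun y => φ y j)
        (∑ k : Fin 3, (B k j) • ((fderiv ℝ (fun y => φhat y k) xh).comp L)) x := by
      rw [hφj]
      exact HasFDerivAt.fun_sum fun k _ => hterm k
    rw [pd, hsum.fderiv, ContinuousLinearMap.sum_apply]
    refine Finset.sum_congr rfl fun k _ => ?_
    rw [ContinuousLinearMap.smul_apply, ContinuousLinearMap.comp_apply]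
    have hLapp : L (Pi.single i 1) = ∑ l : Fin 3, (B l i) • (Pi.single l 1 : Fin 3 → ℝ) := by
      funext m
      rw [hL, Matrix.mulVec_single]
      simp [Finset.sum_apply, Pi.single_apply]
    rw [hLapp, map_sum, Finset.smul_sum]
    refine Finset.sum_congr rfl fun l _ => ?_
    rw [(fderiv ℝ (fun y => φhat y k) xh).map_smul]
    simp only [pd, smul_eq_mul]
    ring
  have hadj : B.adjugate = (A.det)⁻¹ • A := by
    have h1 := Matrix.mul_adjugate B
    have h2 : A * (B * B.adjugate) = A * (B.det • 1) := by rw [h1]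
    rw [← Matrix.mul_assoc, hBdef, Matrix.mul_nonsing_inv A hA, Matrix.one_mul] at h2
    rw [← hBdef] at h2
    rw [h2, hBdef, Matrix.det_nonsing_inv, Matrix.mul_smul, Matrix.mul_one,
      Ring.inverse_eq_inv']
  have hRHS : (A.det)⁻¹ • A.mulVec (curl φhat xh) = (B.adjugate).mulVec (curl φhat xh) := by
    rw [hadj, Matrix.smul_mulVec]
  rw [hRHS, Matrix.adjugate_fin_three]
  funext m
  fin_cases m <;>
  · simp only [curl, key, Matrix.mulVec, dotProduct, Fin.sum_univ_three,
      Matrix.cons_val_zero, Matrix.cons_val_one, Matrix.head_cons, Matrix.cons_val_two,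
      Matrix.tail_cons, Matrix.of_apply, Matrix.cons_val', Matrix.empty_val',
      Matrix.cons_val_fin_one, Matrix.head_fin_const, Fin.zero_eta, Fin.mk_one, Fin.reduceFinMk,
      Fin.isValue]
    ring
end

section
/- Energy conservation of the semi-discrete central-flux DG system: let M_ε, M_μ, M_{μ/α} be symmetric positive-definite matrices and C, C_F arbitrary real matrices. If (e(t), h(t), h_s(t)) solves M_ε e' = C h + C_F h_s, M_μ h' = -Cᵀ e, M_{μ/α} h_s' = -C_Fᵀ e, then the discrete energy E(t) = ½(eᵀ M_ε e + hᵀ M_μ h + h_sᵀ M_{μ/α} h_s) is constant in time. -/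
open Matrix

lemma quad_hasDerivAt {n : ℕ} (M : Matrix (Fin n) (Fin n) ℝ)
    (x : ℝ → Fin n → ℝ) (hx : Differentiable ℝ x) (t : ℝ) :
    HasDerivAt (fun s => x s ⬝ᵥ M.mulVec (x s))
      (deriv x t ⬝ᵥ M.mulVec (x t) + x t ⬝ᵥ M.mulVec (deriv x t)) t := by
  have hxi : ∀ i, HasDerivAt (fun s => x s i) (deriv x t i) t :=
    hasDerivAt_pi.1 (hx t).hasDerivAt
  have key : ∀ s, x s ⬝ᵥ M.mulVec (x s) = ∑ i, ∑ j, x s i * (M i j * x s j) := by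
    intro s
    simp [dotProduct, mulVec, Finset.mul_sum]
  have key' : deriv x t ⬝ᵥ M.mulVec (x t) + x t ⬝ᵥ M.mulVec (deriv x t)
      = ∑ i, ∑ j, (deriv x t i * (M i j * x t j) + x t i * (M i j * deriv x t j)) := by
    simp [dotProduct, mulVec, Finset.mul_sum, Finset.sum_add_distrib]
  rw [key']
  have : HasDerivAt (fun s => ∑ i, ∑ j, x s i * (M i j * x s j))
      (∑ i, ∑ j, (deriv x t i * (M i j * x t j) + x t i * (M i j * deriv x t j))) t := by
    apply HasDerivAt.fun_sum; intro i _
    apply HasDerivAt.fun_sum; intro j _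
    have h1 := (hxi i).mul ((hxi j).const_mul (M i j))
    exact h1
  exact this.congr_of_eventuallyEq (Filter.Eventually.of_forall key)

lemma symm_dot {n : ℕ} (M : Matrix (Fin n) (Fin n) ℝ) (hM : Mᵀ = M)
    (u v : Fin n → ℝ) : u ⬝ᵥ M.mulVec v = v ⬝ᵥ M.mulVec u := by
  rw [Matrix.dotProduct_mulVec, ← Matrix.mulVec_transpose, hM, dotProduct_comm]

/-- Energy conservation of the semi-discrete central-flux DG system. -/
theorem dg_energy_conservation {n m k : ℕ}
    (Mε : Matrix (Fin n) (Fin n) ℝ) (Mμ : Matrix (Fin m) (Fin m) ℝ)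
    (Ms : Matrix (Fin k) (Fin k) ℝ)
    (hMε : Mε.PosDef) (hMμ : Mμ.PosDef) (hMs : Ms.PosDef)
    (C : Matrix (Fin n) (Fin m) ℝ) (CF : Matrix (Fin n) (Fin k) ℝ)
    (e : ℝ → Fin n → ℝ) (h : ℝ → Fin m → ℝ) (hs : ℝ → Fin k → ℝ)
    (he : Differentiable ℝ e) (hh : Differentiable ℝ h) (hhs : Differentiable ℝ hs)
    (heq : ∀ t, Mε.mulVec (deriv e t) = C.mulVec (h t) + CF.mulVec (hs t))
    (hheq : ∀ t, Mμ.mulVec (deriv h t) = -(Cᵀ.mulVec (e t)))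
    (hseq : ∀ t, Ms.mulVec (deriv hs t) = -((CF)ᵀ.mulVec (e t))) :
    ∀ t t' : ℝ,
      (1 / 2) * (e t ⬝ᵥ Mε.mulVec (e t) + h t ⬝ᵥ Mμ.mulVec (h t) +
          hs t ⬝ᵥ Ms.mulVec (hs t)) =
      (1 / 2) * (e t' ⬝ᵥ Mε.mulVec (e t') + h t' ⬝ᵥ Mμ.mulVec (h t') +
          hs t' ⬝ᵥ Ms.mulVec (hs t')) := by
  have hMεs : Mεᵀ = Mε := by
    have := hMε.1; rwa [Matrix.IsHermitian, conjTranspose_eq_transpose_of_trivial] at this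
  have hMμs : Mμᵀ = Mμ := by
    have := hMμ.1; rwa [Matrix.IsHermitian, conjTranspose_eq_transpose_of_trivial] at this
  have hMss : Msᵀ = Ms := by
    have := hMs.1; rwa [Matrix.IsHermitian, conjTranspose_eq_transpose_of_trivial] at this
  set E : ℝ → ℝ := fun t =>
    (1 / 2) * (e t ⬝ᵥ Mε.mulVec (e t) + h t ⬝ᵥ Mμ.mulVec (h t) +
      hs t ⬝ᵥ Ms.mulVec (hs t)) with hE
  have hd : ∀ t, HasDerivAt E 0 t := by
    intro t
    have h1 := quad_hasDerivAt Mε e he t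
    have h2 := quad_hasDerivAt Mμ h hh t
    have h3 := quad_hasDerivAt Ms hs hhs t
    have hD := (((h1.add h2).add h3).const_mul (1/2 : ℝ))
    have hval : (1/2 : ℝ) *
        ((deriv e t ⬝ᵥ Mε.mulVec (e t) + e t ⬝ᵥ Mε.mulVec (deriv e t)) +
         (deriv h t ⬝ᵥ Mμ.mulVec (h t) + h t ⬝ᵥ Mμ.mulVec (deriv h t)) +
         (deriv hs t ⬝ᵥ Ms.mulVec (hs t) + hs t ⬝ᵥ Ms.mulVec (deriv hs t))) = 0 := by
      rw [symm_dot Mε hMεs (deriv e t) (e t), symm_dot Mμ hMμs (deriv h t) (h t),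
        symm_dot Ms hMss (deriv hs t) (hs t), heq t, hheq t, hseq t]
      have key1 : e t ⬝ᵥ C.mulVec (h t) = h t ⬝ᵥ Cᵀ.mulVec (e t) := by
        rw [Matrix.dotProduct_mulVec, ← Matrix.mulVec_transpose, dotProduct_comm]
      have key2 : e t ⬝ᵥ CF.mulVec (hs t) = hs t ⬝ᵥ (CF)ᵀ.mulVec (e t) := by
        rw [Matrix.dotProduct_mulVec, ← Matrix.mulVec_transpose, dotProduct_comm]
      simp [dotProduct_add, dotProduct_neg, key1, key2]
      ring
    rw [hval] at hD
    exact hD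
  intro t t'
  have := is_const_of_deriv_eq_zero (f := E)
    (fun x => (hd x).differentiableAt) (fun x => (hd x).deriv) t t'
  simpa [hE] using this
end
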